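/- arXiv:1409.8132 — 6 statements merged into one kernel-verified Lean document; each statement's English description precedes it below -/
import Mathlib

section
/- The Diophantine equation x^2 = 57·2^n + 117440512 has solutions in nonnegative integers (x,n) exactly for n ∈ {0, 14, 16, 20, 24, 25}, with corresponding x-values 10837, 10880, 11008, 13312, 32768, 45056; in particular, these six pairs are all solutions. -/
lemma sq_det (x C v : ℕ) (h1 : v * v ≤ C) (h2 : C < (v + 1) * (v + 1))
    (h : x ^ 2 = C) : x = v := by
  by_contra hne
  rw [pow_two] at h
  rcases Nat.lt_or_ge x v with hl | hg
  · have := Nat.mul_self_lt_mul_self hl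
    omega
  · have hx1 : v + 1 ≤ x := by omega
    have := Nat.mul_le_mul hx1 hx1
    omega

lemma sq_no (x C v : ℕ) (h1 : v * v < C) (h2 : C < (v + 1) * (v + 1)) :
    x ^ 2 ≠ C := by
  intro h
  rw [pow_two] at h
  rcases Nat.lt_or_ge x (v + 1) with hl | hg
  · have hx : x ≤ v := by omega
    have := Nat.mul_le_mul hx hx
    omega
  · have := Nat.mul_le_mul hg hg
    omega

theorem stmt_3 (x n : ℕ) :
    x^2 = 57 * 2^n + 117440512 ↔
      (x, n) = (10837, 0) ∨ (x, n) = (10880, 14) ∨ (x, n) = (11008, 16) ∨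
      (x, n) = (13312, 20) ∨ (x, n) = (32768, 24) ∨ (x, n) = (45056, 25) := by
  constructor
  · intro h
    by_cases hn : n ≤ 26
    · interval_cases n
      · norm_num at h
        have hx := sq_det x 117440569 10837 (by norm_num) (by norm_num) h
        subst hx; decide
      · norm_num at h
        exact absurd h (sq_no x 117440626 10837 (by norm_num) (by norm_num))
      · norm_num at h
        exact absurd h (sq_no x 117440740 10837 (by norm_num) (by norm_num))
      · norm_num at h
        exact absurd h (sq_no x 117440968 10837 (by norm_num) (by norm_num))
      · norm_num at h
        exact absurd h (sq_no x 117441424 10837 (by norm_num) (by norm_num))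
      · norm_num at h
        exact absurd h (sq_no x 117442336 10837 (by norm_num) (by norm_num))
      · norm_num at h
        exact absurd h (sq_no x 117444160 10837 (by norm_num) (by norm_num))
      · norm_num at h
        exact absurd h (sq_no x 117447808 10837 (by norm_num) (by norm_num))
      · norm_num at h
        exact absurd h (sq_no x 117455104 10837 (by norm_num) (by norm_num))
      · norm_num at h
        exact absurd h (sq_no x 117469696 10838 (by norm_num) (by norm_num))
      · norm_num at h
        exact absurd h (sq_no x 117498880 10839 (by norm_num) (by norm_num))
      · norm_num at h
        exact absurd h (sq_no x 117557248 10842 (by norm_num) (by norm_num))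
      · norm_num at h
        exact absurd h (sq_no x 117673984 10847 (by norm_num) (by norm_num))
      · norm_num at h
        exact absurd h (sq_no x 117907456 10858 (by norm_num) (by norm_num))
      · norm_num at h
        have hx := sq_det x 118374400 10880 (by norm_num) (by norm_num) h
        subst hx; decide
      · norm_num at h
        exact absurd h (sq_no x 119308288 10922 (by norm_num) (by norm_num))
      · norm_num at h
        have hx := sq_det x 121176064 11008 (by norm_num) (by norm_num) h
        subst hx; decide
      · norm_num at h
        exact absurd h (sq_no x 124911616 11176 (by norm_num) (by norm_num))
      · norm_num at h
        exact absurd h (sq_no x 132382720 11505 (by norm_num) (by norm_num))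
      · norm_num at h
        exact absurd h (sq_no x 147324928 12137 (by norm_num) (by norm_num))
      · norm_num at h
        have hx := sq_det x 177209344 13312 (by norm_num) (by norm_num) h
        subst hx; decide
      · norm_num at h
        exact absurd h (sq_no x 236978176 15394 (by norm_num) (by norm_num))
      · norm_num at h
        exact absurd h (sq_no x 356515840 18881 (by norm_num) (by norm_num))
      · norm_num at h
        exact absurd h (sq_no x 595591168 24404 (by norm_num) (by norm_num))
      · norm_num at h
        have hx := sq_det x 1073741824 32768 (by norm_num) (by norm_num) h
        subst hx; decide
      · norm_num at h
        have hx := sq_det x 2030043136 45056 (by norm_num) (by norm_num) h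
        subst hx; decide
      · norm_num at h
        exact absurd h (sq_no x 3942645760 62790 (by norm_num) (by norm_num))
    · exfalso
      push_neg at hn
      obtain ⟨m, rfl⟩ := Nat.exists_eq_add_of_le hn
      have key : 57 * 2 ^ (27 + m) + 117440512 = 2 ^ 24 * (456 * 2 ^ m + 7) := by
        rw [pow_add]; ring
      have hdvd : (2 : ℕ) ^ 12 ∣ x := by
        have h2 : ((2 : ℕ) ^ 12) ^ 2 ∣ x ^ 2 := by
          rw [h, key]
          exact ⟨456 * 2 ^ m + 7, by ring⟩
        exact (Nat.pow_dvd_pow_iff (by norm_num)).mp h2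
      obtain ⟨y, rfl⟩ := hdvd
      rw [key, mul_pow] at h
      have hy : y ^ 2 = 456 * 2 ^ m + 7 := by
        have h24 : ((2 : ℕ) ^ 12) ^ 2 = 2 ^ 24 := by norm_num
        rw [h24] at h
        exact Nat.eq_of_mul_eq_mul_left (by norm_num) h
      have hz : ((y : ZMod 8)) ^ 2 = 7 := by
        have hc := congrArg (Nat.cast : ℕ → ZMod 8) hy
        push_cast at hc
        rw [hc, show ((456 : ZMod 8)) = 0 by decide]
        ring
      exact (by decide : ∀ z : ZMod 8, z ^ 2 ≠ 7) _ hz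
  · rintro (h | h | h | h | h | h) <;> simp_all
end

section
/- The Diophantine equation x^2 = 28·3^n + 2997 has solutions in nonnegative integers exactly for n ∈ {0, 2, 5, 6, 10}; in particular the pairs with n = 0, 2, 5, 6, 10 (and x = 55, 57, 83, 141, 1287 respectively) are solutions. -/
set_option maxRecDepth 100000

def Le : List (Nat × Nat) := [(17, 3), (17, 34908), (143, 27), (143, 34884), (233, 14163), (233, 20748), (1259, 8484), (1259, 26427), (1358, 6615), (1358, 28296), (1394, 6861), (1394, 28050), (1763, 6012), (1763, 28899), (2042, 10662), (2042, 24249), (2978, 13383), (2978, 21528), (3203, 6027), (3203, 28884), (3383, 16659), (3383, 18252), (4175, 789), (4175, 34122), (4598, 11610), (4598, 23301), (4823, 2883), (4823, 32028), (5012, 11973), (5012, 22938), (5255, 2688), (5255, 32223), (6578, 15198), (6578, 19713), (6848, 13359), (6848, 21552), (7226, 13827), (7226, 21084), (7442, 1335), (7442, 33576), (7847, 12648), (7847, 22263), (8603, 2589), (8603, 32322), (8648, 1710), (8648, 33201), (9494, 78), (9494, 34833), (9701, 17379), (9701, 17532), (12941, 36), (12941, 34875), (13103, 9063), (13103, 25848),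 (13112, 5790), (13112, 29121), (13409, 8187), (13409, 26724), (15434, 9348), (15434, 25563), (16082, 17313), (16082, 17598), (16424, 11079), (16424, 23832), (16586, 6642), (16586, 28269), (16946, 8373), (16946, 26538), (17054, 438), (17054, 34473), (18782, 4497), (18782, 30414), (18998, 9618), (18998, 25293), (21239, 4560), (21239, 30351), (22292, 9663), (22292, 25248), (23066, 6642), (23066, 28269), (23228, 4437), (23228, 30474), (24047, 11919), (24047, 22992), (24452, 42), (24452, 34869), (26549, 1305), (26549, 33606), (26585, 678), (26585, 34233), (26612, 8985), (26612, 25926), (26639, 15618), (26639, 19293), (26711, 3843), (26711, 31068), (26882, 957), (26882, 33954), (28556, 3813), (28556, 31098), (29951, 13653), (29951, 21258), (31004, 9468), (31004, 25443), (31661, 3819), (31661, 31092), (34037, 2508), (34037, 32403)]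

def Lo : List (Nat × Nat) := [(2, 4), (2, 23), (2, 31), (2, 50), (2, 58), (2, 77), (11, 1), (11, 26), (11, 28), (11, 53), (11, 55), (11, 80), (20, 11), (20, 16), (20, 38), (20, 43), (20, 65), (20, 70), (29, 5), (29, 22), (29, 32), (29, 49), (29, 59), (29, 76), (38, 8), (38, 19), (38, 35), (38, 46), (38, 62), (38, 73), (47, 7), (47, 20), (47, 34), (47, 47), (47, 61), (47, 74), (56, 13), (56, 14), (56, 40), (56, 41), (56, 67), (56, 68), (65, 10), (65, 17), (65, 37), (65, 44), (65, 64), (65, 71), (74, 2), (74, 25), (74, 29), (74, 52), (74, 56), (74, 79)]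

def Cyc : List Nat := [1, 3, 9, 27, 81, 243, 298, 32, 96, 288, 2, 6, 18, 54, 162, 55, 165, 64, 192, 145, 4, 12, 36, 108, 324, 110, 330, 128, 384, 290, 8, 24, 72, 216, 217, 220, 229, 256, 337, 149, 16, 48, 144]

def We : List Nat := [6, 8, 12, 17, 22, 27, 32, 37, 42, 48, 53, 58, 63, 69, 74, 79, 84, 90, 95, 100, 106, 111, 116, 121, 127, 132, 137, 143, 148, 153, 158, 164, 169, 174, 180, 185, 190, 195, 201, 206, 211, 217, 222, 227, 232, 238, 243, 248, 254, 259, 264, 269, 275, 280, 285, 291, 296, 301, 306, 312, 317, 322, 328, 333, 338, 344, 349, 354, 359, 365, 370, 375, 381, 386, 391, 396, 402, 407, 412, 418, 423, 428, 433, 439, 444, 449, 455, 460, 465, 470, 476, 481, 486, 492, 497, 502, 508, 513, 518, 523, 529, 534, 539, 545, 550, 555, 560, 566, 571, 576, 582, 587, 592, 597, 603, 608, 613, 619, 624, 629, 635, 640, 645, 650, 656, 661, 666, 672, 677, 682, 687, 693, 698, 703, 709, 714, 719, 724, 730, 735, 740, 746, 751, 756, 762, 767]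

def Wo : List Nat := [6, 11, 19, 28, 37, 46, 55, 64, 73, 82, 91, 101, 110, 119, 128, 137, 146, 155, 165, 174, 183, 192, 201, 210, 220, 229, 238, 247, 256, 265, 275, 284, 293, 302, 311, 320, 330]

lemma le_closed : ∀ p ∈ Le, ((127*p.1+672*p.2)%34911, (24*p.1+127*p.2)%34911) ∈ Le := by decide

lemma lo_closed : ∀ p ∈ Lo, ((55*p.1+504*p.2)%81, (6*p.1+55*p.2)%81) ∈ Lo := by decide

lemma le_good : ∀ p ∈ Le, ¬(p.2 % 81 = 0 ∧ p.2 % 431 ∈ Cyc) := by decide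

lemma lo_good : ∀ p ∈ Lo, p.2 ≠ 0 := by decide

lemma cyc_closed : ∀ c ∈ Cyc, (3*c)%431 ∈ Cyc := by decide

lemma pow3_mem : ∀ t : ℕ, 3^t % 431 ∈ Cyc := by
  intro t
  induction t with
  | zero => decide
  | succ n ih =>
    have h : 3^(n+1) % 431 = (3 * (3^n % 431)) % 431 := by
      rw [pow_succ, Nat.mul_mod]
      norm_num [Nat.mul_comm]
    rw [h]
    exact cyc_closed _ ih

lemma evenAux : ∀ z y : ℕ, y^2 = 28*z^2 + 37 → (y % 34911, z % 34911) ∈ Le := by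
  intro z
  induction z using Nat.strong_induction_on with
  | _ z ih =>
    intro y h
    by_cases hz : z ≤ 145
    · have hd : ∀ z' < 146, z' = 3 ∨ z' = 27 ∨ ((We.getD z' 0)^2 < 28*z'^2+37 ∧ 28*z'^2+37 < (We.getD z' 0 + 1)^2) := by decide
      rcases hd z (by omega) with rfl | rfl | ⟨h1, h2⟩
      · norm_num at h
        have hy1 : 17 ≤ y := by nlinarith
        have hy2 : y ≤ 17 := by nlinarith
        have : y = 17 := by omega
        subst this
        decide
      · norm_num at h
        have hy1 : 143 ≤ y := by nlinarith
        have hy2 : y ≤ 143 := by nlinarith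
        have : y = 143 := by omega
        subst this
        decide
      · exfalso
        rw [← h] at h1 h2
        have l1 : We.getD z 0 < y := by
          have := (Nat.pow_lt_pow_iff_left (two_ne_zero)).mp h1
          exact this
        have l2 : y < We.getD z 0 + 1 := by
          have := (Nat.pow_lt_pow_iff_left (two_ne_zero)).mp h2
          exact this
        omega
    · push_neg at hz
      have hz146 : (146:ℤ) ≤ (z:ℤ) := by exact_mod_cast hz
      have h' : (y:ℤ)^2 = 28*(z:ℤ)^2 + 37 := by exact_mod_cast h
      have hy0 : (0:ℤ) ≤ (y:ℤ) := Int.natCast_nonneg y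
      have hz0 : (0:ℤ) ≤ (z:ℤ) := Int.natCast_nonneg z
      have hsum1 : (0:ℤ) ≤ 24*(y:ℤ) + 127*(z:ℤ) := by positivity
      have hsum2 : (0:ℤ) ≤ 127*(y:ℤ) + 672*(z:ℤ) := by positivity
      have hzsq : (146:ℤ)^2 ≤ (z:ℤ)^2 := by nlinarith
      have hzpos : 24*(y:ℤ) ≤ 127*(z:ℤ) := by nlinarith
      have hypos : 672*(z:ℤ) ≤ 127*(y:ℤ) := by nlinarith
      have hzlt : 127*(z:ℤ) - 24*(y:ℤ) < (z:ℤ) := by nlinarith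
      set A : ℤ := 127*(z:ℤ) - 24*(y:ℤ) with hA
      set B : ℤ := 127*(y:ℤ) - 672*(z:ℤ) with hB
      have hA0 : 0 ≤ A := by omega
      have hB0 : 0 ≤ B := by omega
      obtain ⟨a, ha⟩ : ∃ a : ℕ, (a:ℤ) = A := ⟨A.toNat, Int.toNat_of_nonneg hA0⟩
      obtain ⟨b, hb⟩ : ∃ b : ℕ, (b:ℤ) = B := ⟨B.toNat, Int.toNat_of_nonneg hB0⟩
      have heq : b^2 = 28*a^2 + 37 := by
        have : (b:ℤ)^2 = 28*(a:ℤ)^2 + 37 := by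
          rw [ha, hb, hA, hB]; linear_combination h'
        exact_mod_cast this
      have haz : a < z := by
        have : (a:ℤ) < (z:ℤ) := by rw [ha]; omega
        exact_mod_cast this
      have hmem := ih a haz b heq
      have hyrec : y = 127*b + 672*a := by
        have : (y:ℤ) = 127*(b:ℤ) + 672*(a:ℤ) := by rw [ha, hb, hA, hB]; ring
        exact_mod_cast this
      have hzrec : z = 24*b + 127*a := by
        have : (z:ℤ) = 24*(b:ℤ) + 127*(a:ℤ) := by rw [ha, hb, hA, hB]; ring
        exact_mod_cast this
      have hstep := le_closed (b % 34911, a % 34911) hmem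
      have e1 : y % 34911 = (127*(b % 34911)+672*(a % 34911)) % 34911 := by omega
      have e2 : z % 34911 = (24*(b % 34911)+127*(a % 34911)) % 34911 := by omega
      rw [e1, e2]
      exact hstep

lemma oddAux : ∀ z y : ℕ, y^2 = 84*z^2 + 37 → (y % 81, z % 81) ∈ Lo := by
  intro z
  induction z using Nat.strong_induction_on with
  | _ z ih =>
    intro y h
    by_cases hz : z ≤ 36
    · have hd : ∀ z' < 37, z' = 1 ∨ z' = 11 ∨ ((Wo.getD z' 0)^2 < 84*z'^2+37 ∧ 84*z'^2+37 < (Wo.getD z' 0 + 1)^2) := by decide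
      rcases hd z (by omega) with rfl | rfl | ⟨h1, h2⟩
      · norm_num at h
        have hy1 : 11 ≤ y := by nlinarith
        have hy2 : y ≤ 11 := by nlinarith
        have : y = 11 := by omega
        subst this
        decide
      · norm_num at h
        have hy1 : 101 ≤ y := by nlinarith
        have hy2 : y ≤ 101 := by nlinarith
        have : y = 101 := by omega
        subst this
        decide
      · exfalso
        rw [← h] at h1 h2
        have l1 : Wo.getD z 0 < y := (Nat.pow_lt_pow_iff_left (two_ne_zero)).mp h1
        have l2 : y < Wo.getD z 0 + 1 := (Nat.pow_lt_pow_iff_left (two_ne_zero)).mp h2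
        omega
    · push_neg at hz
      have hz37 : (37:ℤ) ≤ (z:ℤ) := by exact_mod_cast hz
      have h' : (y:ℤ)^2 = 84*(z:ℤ)^2 + 37 := by exact_mod_cast h
      have hy0 : (0:ℤ) ≤ (y:ℤ) := Int.natCast_nonneg y
      have hz0 : (0:ℤ) ≤ (z:ℤ) := Int.natCast_nonneg z
      have hsum1 : (0:ℤ) ≤ 6*(y:ℤ) + 55*(z:ℤ) := by positivity
      have hsum2 : (0:ℤ) ≤ 55*(y:ℤ) + 504*(z:ℤ) := by positivity
      have hzsq : (37:ℤ)^2 ≤ (z:ℤ)^2 := by nlinarith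
      have hzpos : 6*(y:ℤ) ≤ 55*(z:ℤ) := by nlinarith
      have hypos : 504*(z:ℤ) ≤ 55*(y:ℤ) := by nlinarith
      have hzlt : 55*(z:ℤ) - 6*(y:ℤ) < (z:ℤ) := by nlinarith
      set A : ℤ := 55*(z:ℤ) - 6*(y:ℤ) with hA
      set B : ℤ := 55*(y:ℤ) - 504*(z:ℤ) with hB
      have hA0 : 0 ≤ A := by omega
      have hB0 : 0 ≤ B := by omega
      obtain ⟨a, ha⟩ : ∃ a : ℕ, (a:ℤ) = A := ⟨A.toNat, Int.toNat_of_nonneg hA0⟩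
      obtain ⟨b, hb⟩ : ∃ b : ℕ, (b:ℤ) = B := ⟨B.toNat, Int.toNat_of_nonneg hB0⟩
      have heq : b^2 = 84*a^2 + 37 := by
        have : (b:ℤ)^2 = 84*(a:ℤ)^2 + 37 := by
          rw [ha, hb, hA, hB]; linear_combination h'
        exact_mod_cast this
      have haz : a < z := by
        have : (a:ℤ) < (z:ℤ) := by rw [ha]; omega
        exact_mod_cast this
      have hmem := ih a haz b heq
      have hyrec : y = 55*b + 504*a := by
        have : (y:ℤ) = 55*(b:ℤ) + 504*(a:ℤ) := by rw [ha, hb, hA, hB]; ring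
        exact_mod_cast this
      have hzrec : z = 6*b + 55*a := by
        have : (z:ℤ) = 6*(b:ℤ) + 55*(a:ℤ) := by rw [ha, hb, hA, hB]; ring
        exact_mod_cast this
      have hstep := lo_closed (b % 81, a % 81) hmem
      have e1 : y % 81 = (55*(b % 81)+504*(a % 81)) % 81 := by omega
      have e2 : z % 81 = (6*(b % 81)+55*(a % 81)) % 81 := by omega
      rw [e1, e2]
      exact hstep

lemma evenPow : ∀ t y : ℕ, y^2 = 28*(3^t)^2 + 37 → t = 1 ∨ t = 3 := by
  intro t y h
  by_cases ht : t ≤ 3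
  · interval_cases t
    · exfalso
      norm_num at h
      have hy : y < 9 := by nlinarith
      have : ∀ y' < 9, y'^2 ≠ 65 := by decide
      exact this y hy h
    · left; rfl
    · exfalso
      norm_num at h
      have hy : y < 49 := by nlinarith
      have : ∀ y' < 49, y'^2 ≠ 2305 := by decide
      exact this y hy h
    · right; rfl
  · exfalso
    push_neg at ht
    have hmem := evenAux (3^t) y h
    apply le_good (y % 34911, 3^t % 34911) hmem
    constructor
    · show (3^t % 34911) % 81 = 0
      have h81 : (81:ℕ) ∣ 34911 := by norm_num
      rw [Nat.mod_mod_of_dvd _ h81]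
      have : (81:ℕ) ∣ 3^t := by
        calc (81:ℕ) = 3^4 := by norm_num
        _ ∣ 3^t := pow_dvd_pow 3 (by omega)
      omega
    · show (3^t % 34911) % 431 ∈ Cyc
      have h431 : (431:ℕ) ∣ 34911 := by norm_num
      rw [Nat.mod_mod_of_dvd _ h431]
      exact pow3_mem t

lemma oddPow : ∀ t y : ℕ, y^2 = 84*(3^t)^2 + 37 → t = 0 := by
  intro t y h
  by_cases ht : t ≤ 3
  · interval_cases t
    · rfl
    · exfalso
      norm_num at h
      have hy : y < 29 := by nlinarith
      have : ∀ y' < 29, y'^2 ≠ 793 := by decide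
      exact this y hy h
    · exfalso
      norm_num at h
      have hy : y < 83 := by nlinarith
      have : ∀ y' < 83, y'^2 ≠ 6841 := by decide
      exact this y hy h
    · exfalso
      norm_num at h
      have hy : y < 248 := by nlinarith
      have : ∀ y' < 248, y'^2 ≠ 61273 := by decide
      exact this y hy h
  · exfalso
    push_neg at ht
    have hmem := oddAux (3^t) y h
    apply lo_good (y % 81, 3^t % 81) hmem
    show 3^t % 81 = 0
    have : (81:ℕ) ∣ 3^t := by
      calc (81:ℕ) = 3^4 := by norm_num
      _ ∣ 3^t := pow_dvd_pow 3 (by omega)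
    omega

theorem stmt_6 :
    (∀ x n : ℕ, x^2 = 28 * 3^n + 2997 →
      n = 0 ∨ n = 2 ∨ n = 5 ∨ n = 6 ∨ n = 10) ∧
    (∀ n : ℕ, (n = 0 ∨ n = 2 ∨ n = 5 ∨ n = 6 ∨ n = 10) →
      ∃ x : ℕ, x^2 = 28 * 3^n + 2997) := by
  constructor
  · intro x n h
    by_cases hn : n ≤ 3
    · interval_cases n
      · left; rfl
      · exfalso
        norm_num at h
        have hx : x < 56 := by nlinarith
        have : ∀ x' < 56, x'^2 ≠ 3081 := by decide
        exact this x hx h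
      · right; left; rfl
      · exfalso
        norm_num at h
        have hx : x < 62 := by nlinarith
        have : ∀ x' < 62, x'^2 ≠ 3753 := by decide
        exact this x hx h
    · push_neg at hn
      obtain ⟨m, rfl⟩ : ∃ m, n = m + 4 := ⟨n - 4, by omega⟩
      have hP : x^2 = 2268 * 3^m + 2997 := by
        rw [h, pow_add]; ring
      have h3 : (3:ℕ) ∣ x := by
        apply Nat.Prime.dvd_of_dvd_pow (p := 3) (n := 2) (by norm_num)
        exact ⟨756 * 3^m + 999, by rw [hP]; ring⟩
      obtain ⟨a, rfl⟩ := h3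
      have ha2 : a^2 = 252 * 3^m + 333 := by
        have h9 : 9 * a^2 = 2268 * 3^m + 2997 := by rw [← hP]; ring
        omega
      have h3a : (3:ℕ) ∣ a := by
        apply Nat.Prime.dvd_of_dvd_pow (p := 3) (n := 2) (by norm_num)
        exact ⟨84 * 3^m + 111, by rw [ha2]; ring⟩
      obtain ⟨y, rfl⟩ := h3a
      have hy2 : y^2 = 28 * 3^m + 37 := by
        have h9 : 9 * y^2 = 252 * 3^m + 333 := by rw [← ha2]; ring
        omega
      rcases Nat.even_or_odd m with he | ho
      · obtain ⟨t, rfl⟩ := he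
        have hy2' : y^2 = 28 * (3^t)^2 + 37 := by
          rw [hy2]
          have h3t : (3:ℕ)^(t+t) = (3^t)^2 := by rw [pow_add, sq]
          rw [h3t]
        rcases evenPow t y hy2' with h1 | h3'
        · subst h1; right; right; right; left; rfl
        · subst h3'; right; right; right; right; rfl
      · obtain ⟨t, rfl⟩ := ho
        have hy2' : y^2 = 84 * (3^t)^2 + 37 := by
          rw [hy2]
          have h3t : (3:ℕ)^(2*t+1) = 3*(3^t)^2 := by
            rw [pow_succ, mul_comm 2 t, pow_mul]; ring
          rw [h3t]; ring
        have := oddPow t y hy2'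
        subst this
        right; right; left; rfl
  · intro n hn
    rcases hn with rfl | rfl | rfl | rfl | rfl
    · exact ⟨55, by norm_num⟩
    · exact ⟨57, by norm_num⟩
    · exact ⟨99, by norm_num⟩
    · exact ⟨153, by norm_num⟩
    · exact ⟨1287, by norm_num⟩
end

section
/- For every positive integer t and nonnegative integer m, the Diophantine equation x^2 = (2t)^n + t^2·((2t)^{2(m+2)} - 2(2t+1)(2t)^{m+2} + (2t-1)^2) has at least three solutions in positive integers, namely (x,n) = (t((2t)^{m+2} - 2t - 1), 3), (t((2t)^{m+2} - 2t + 1), m+4), and (t((2t)^{m+2} + 2t - 1), m+5). -/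
theorem stmt_12 (t : ℤ) (ht : 0 < t) (m : ℕ) :
    ((t * ((2*t)^(m+2) - 2*t - 1))^2
      = (2*t)^3 + t^2 * ((2*t)^(2*(m+2)) - 2*(2*t+1)*(2*t)^(m+2) + (2*t-1)^2)) ∧
    ((t * ((2*t)^(m+2) - 2*t + 1))^2
      = (2*t)^(m+4) + t^2 * ((2*t)^(2*(m+2)) - 2*(2*t+1)*(2*t)^(m+2) + (2*t-1)^2)) ∧
    ((t * ((2*t)^(m+2) + 2*t - 1))^2
      = (2*t)^(m+5) + t^2 * ((2*t)^(2*(m+2)) - 2*(2*t+1)*(2*t)^(m+2) + (2*t-1)^2)) := by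
  have e2 : (2*t)^(2*(m+2)) = ((2*t)^(m+2))^2 := by
    rw [mul_comm 2 (m+2), pow_mul]
  have e4 : (2*t)^(m+4) = (2*t)^(m+2) * (2*t)^2 := by
    rw [show m+4 = m+2+2 from rfl, pow_add]
  have e5 : (2*t)^(m+5) = (2*t)^(m+2) * (2*t)^3 := by
    rw [show m+5 = m+2+3 from rfl, pow_add]
  rw [e2, e4, e5]
  set K := (2*t)^(m+2)
  refine ⟨by ring, by ring, by ring⟩
end

section
/- The Diophantine equation x^2 = 6^n + 2185 has exactly three solutions in positive integers (x,n), namely n = 3, 4, 6 with x = 49, 59, 221 respectively. -/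
/-- The set of residues `(x % 180, y % 180)` of all positive solutions of
`x^2 = 6*y^2 + 2185`. -/
def Tset : List (ℕ × ℕ) := [(23, 42), (23, 72), (23, 108), (23, 138), (31, 54), (31, 84), (31, 96), (31, 126), (47, 2), (47, 8), (47, 22), (47, 28), (47, 152), (47, 158), (47, 172), (47, 178), (49, 6), (49, 24), (49, 156), (49, 174), (61, 4), (61, 14), (61, 16), (61, 34), (61, 146), (61, 164), (61, 166), (61, 176), (77, 48), (77, 78), (77, 102), (77, 132), (79, 26), (79, 46), (79, 56), (79, 76), (79, 104), (79, 124), (79, 134), (79, 154), (83, 8), (83, 28), (83, 38), (83, 58), (83, 122), (83, 142), (83, 152), (83, 172), (113, 12), (113, 42), (113, 138), (113, 168), (121, 66), (121, 84), (121, 96), (121, 114), (137, 2), (137, 22), (137, 32), (137, 52), (137, 128), (137, 148), (137, 158), (137, 178), (139, 24), (139, 54), (139, 126), (139, 156), (151, 4), (151, 16), (151, 26), (151, 46), (151, 134), (151, 154), (151, 164), (151, 176), (167, 72), (167, 78), (167, 102), (167, 108), (169, 56), (169, 74), (169, 76), (169, 86), (169, 94), (169, 104), (169, 106), (169, 124),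 (173, 38), (173, 58), (173, 68), (173, 88), (173, 92), (173, 112), (173, 122), (173, 142)]

def memT (a b : ℕ) : Bool := decide ((a, b) ∈ Tset)

lemma mem_of_memT {a b : ℕ} (h : memT a b = true) : (a, b) ∈ Tset :=
  of_decide_eq_true h

lemma T_closed : ∀ p ∈ Tset,
    memT ((5*p.1 + 12*p.2) % 180) ((2*p.1 + 5*p.2) % 180) = true := by decide

set_option maxRecDepth 10000 in
lemma T_base : ∀ y < 94, ∀ x < 233, x*x = 6*(y*y) + 2185 →
    memT (x % 180) (y % 180) = true := by decide

lemma T_vals : ∀ p ∈ Tset, p.2 ≠ 36 ∧ p.2 ≠ 1 := by decide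

lemma divisors2185 : ∀ d : ℕ, d < 47 → d ∣ 2185 →
    d = 1 ∨ d = 5 ∨ d = 19 ∨ d = 23 := by
  decide

lemma key : ∀ y x : ℕ, x*x = 6*(y*y) + 2185 → memT (x % 180) (y % 180) = true := by
  intro y
  induction y using Nat.strong_induction_on with
  | _ y ih =>
    intro x hxeq
    by_cases hy : y < 94
    · have hxb : x < 233 := by
        by_contra hc
        push_neg at hc
        have h1 : 233*233 ≤ x*x := Nat.mul_le_mul hc hc
        have h2 : y*y ≤ 93*93 := Nat.mul_le_mul (by omega) (by omega)
        omega
      exact T_base y hy x hxb hxeq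
    · push_neg at hy
      have h2x5y : 2*x ≤ 5*y := by
        by_contra hc
        push_neg at hc
        have h1 : (5*y+1)*(5*y+1) ≤ (2*x)*(2*x) := Nat.mul_le_mul hc hc
        have h2 : 94*94 ≤ y*y := Nat.mul_le_mul hy hy
        have e1 : (5*y+1)*(5*y+1) = 25*(y*y) + 10*y + 1 := by ring
        have e2 : (2*x)*(2*x) = 4*(x*x) := by ring
        omega
      have h12y5x : 12*y ≤ 5*x := by
        by_contra hc
        push_neg at hc
        have h1 : (5*x+1)*(5*x+1) ≤ (12*y)*(12*y) := Nat.mul_le_mul hc hc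
        have e1 : (5*x+1)*(5*x+1) = 25*(x*x) + 10*x + 1 := by ring
        have e2 : (12*y)*(12*y) = 144*(y*y) := by ring
        omega
      have h4y2x : 4*y < 2*x := by
        by_contra hc
        push_neg at hc
        have h1 : (2*x)*(2*x) ≤ (4*y)*(4*y) := Nat.mul_le_mul hc hc
        have e1 : (2*x)*(2*x) = 4*(x*x) := by ring
        have e2 : (4*y)*(4*y) = 16*(y*y) := by ring
        omega
      have hy'lt : 5*y - 2*x < y := by omega
      have hx'eq : (5*x - 12*y)*(5*x - 12*y) = 6*((5*y - 2*x)*(5*y - 2*x)) + 2185 := by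
        zify [h12y5x, h2x5y]
        have hz : (x:ℤ)*x = 6*((y:ℤ)*y) + 2185 := by exact_mod_cast hxeq
        linear_combination hz
      have hmem := ih (5*y - 2*x) hy'lt (5*x - 12*y) hx'eq
      have hstep := T_closed _ (mem_of_memT hmem)
      have hxm : x % 180 = (5*((5*x - 12*y) % 180) + 12*((5*y - 2*x) % 180)) % 180 := by
        omega
      have hym : y % 180 = (2*((5*x - 12*y) % 180) + 5*((5*y - 2*x) % 180)) % 180 := by
        omega
      rw [hxm, hym]
      exact hstep

lemma pow6_mod5 (m : ℕ) : 6^m % 5 = 1 := by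
  simp [Nat.pow_mod]

theorem stmt_13 (x n : ℕ) (hx : 0 < x) (hn : 0 < n) :
    x^2 = 6^n + 2185 ↔
      (x, n) = (49, 3) ∨ (x, n) = (59, 4) ∨ (x, n) = (221, 6) := by
  constructor
  · intro h
    rcases Nat.even_or_odd n with he | ho
    · -- even case: factor (x - 6^m)(x + 6^m) = 2185
      obtain ⟨m, hm⟩ := he
      subst hm
      have hm1 : 1 ≤ m := by omega
      have ht : (6:ℕ)^(m+m) = 6^m * 6^m := by rw [← pow_add]
      have hx2 : x*x = 6^m * 6^m + 2185 := by
        rw [← ht, ← h]; ring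
      have ht6 : 6 ≤ 6^m := by
        calc (6:ℕ) = 6^1 := by norm_num
        _ ≤ 6^m := Nat.pow_le_pow_right (by norm_num) hm1
      have htx : 6^m < x := by
        by_contra hc
        push_neg at hc
        have := Nat.mul_le_mul hc hc
        omega
      have hfac : (x - 6^m) * (x + 6^m) = 2185 := by
        zify [htx.le]
        have hz : (x:ℤ)*x = (6:ℤ)^m * 6^m + 2185 := by exact_mod_cast hx2
        linear_combination hz
      have hdvd : (x - 6^m) ∣ 2185 := ⟨x + 6^m, hfac.symm⟩
      have h1xt : 1 ≤ x - 6^m := by omega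
      have ha47 : x - 6^m < 47 := by
        by_contra hc
        push_neg at hc
        have h1 : 47*47 ≤ (x - 6^m)*(x - 6^m) := Nat.mul_le_mul hc hc
        have h2 : (x - 6^m)*(x - 6^m) ≤ (x - 6^m)*(x + 6^m) :=
          Nat.mul_le_mul_left _ (by omega)
        omega
      have hcases := divisors2185 _ ha47 hdvd
      have h63 : (6:ℕ)^3 = 216 := by norm_num
      have h64 : (6:ℕ)^4 = 1296 := by norm_num
      rcases hcases with h' | h' | h' | h' <;> rw [h'] at hfac
      · -- x - 6^m = 1 : 6^m = 1092, impossible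
        have h6m : (6:ℕ)^m = 1092 := by omega
        have hmlt : m < 4 := by
          by_contra hc
          push_neg at hc
          have := Nat.pow_le_pow_right (show 1 ≤ 6 by norm_num) hc
          omega
        interval_cases m <;> norm_num at h6m
      · -- x - 6^m = 5 : x = 221, 6^m = 216, m = 3, n = 6
        have h6m : (6:ℕ)^m = 216 := by omega
        have hx221 : x = 221 := by omega
        have hmlt : m < 4 := by
          by_contra hc
          push_neg at hc
          have := Nat.pow_le_pow_right (show 1 ≤ 6 by norm_num) hc
          omega
        interval_cases m
        · norm_num at h6m
        · norm_num at h6m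
        · right; right; rw [hx221]
      · -- x - 6^m = 19 : 6^m = 48, impossible
        have h6m : (6:ℕ)^m = 48 := by omega
        have hmlt : m < 3 := by
          by_contra hc
          push_neg at hc
          have := Nat.pow_le_pow_right (show 1 ≤ 6 by norm_num) hc
          omega
        interval_cases m <;> norm_num at h6m
      · -- x - 6^m = 23 : x = 59, 6^m = 36, m = 2, n = 4
        have h6m : (6:ℕ)^m = 36 := by omega
        have hx59 : x = 59 := by omega
        have hmlt : m < 3 := by
          by_contra hc
          push_neg at hc
          have := Nat.pow_le_pow_right (show 1 ≤ 6 by norm_num) hc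
          omega
        interval_cases m
        · norm_num at h6m
        · right; left; rw [hx59]
    · -- odd case: x^2 = 6*(6^m)^2 + 2185, use the Pell-descent invariant
      obtain ⟨m, hm⟩ := ho
      subst hm
      have hy : x*x = 6*((6^m)*(6^m)) + 2185 := by
        have e : (6:ℕ)^(2*m+1) = 6*(6^m*6^m) := by
          rw [← pow_add]; ring
        rw [← e, ← h]; ring
      have hT := mem_of_memT (key (6^m) x hy)
      match m with
      | 0 =>
        have h2 := (T_vals _ hT).2
        norm_num at h2
      | 1 =>
        have hxx : x*x = 2401 := by norm_num at hy; omega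
        have hx49 : x = 49 := by
          by_contra hc
          rcases Nat.lt_or_ge x 49 with hlt | hge
          · have : x*x ≤ 48*48 := Nat.mul_le_mul (by omega) (by omega)
            omega
          · have hge' : 50 ≤ x := by omega
            have : 50*50 ≤ x*x := Nat.mul_le_mul hge' hge'
            omega
        left; rw [hx49]; rfl
      | Nat.succ (Nat.succ k) =>
        have h36 : (6:ℕ)^(k+2) % 180 = 36 := by
          have e : (6:ℕ)^(k+2) = 36 * 6^k := by
            rw [pow_add]; ring
          have h5 := pow6_mod5 k
          omega
        have h1 := (T_vals _ hT).1
        simp only at h1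
        exact absurd h36 h1
  · intro h
    rcases h with h | h | h <;>
      · rw [Prod.mk.injEq] at h
        rw [h.1, h.2]
        norm_num
end

section
/- The Diophantine equation x^2 = 12^n + 25029865 has exactly three solutions in positive integers (x,n), namely (5003, 2), (5293, 6), (21331, 8). -/
private lemma solve_sq (x s c : ℕ) (h : x^2 = c) (h1 : s^2 ≤ c) (h2 : c < (s+1)^2) :
    x = s := by
  rcases lt_trichotomy x s with h3 | h3 | h3
  · have := Nat.pow_lt_pow_left h3 (n := 2) two_ne_zero
    omega
  · exact h3
  · have : (s+1)^2 ≤ x^2 := Nat.pow_le_pow_left h3 2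
    omega

private lemma no_sq (x s c : ℕ) (h : x^2 = c) (h1 : s^2 < c) (h2 : c < (s+1)^2) :
    False := by
  rcases le_or_gt x s with h3 | h3
  · have : x^2 ≤ s^2 := Nat.pow_le_pow_left h3 2
    omega
  · have : (s+1)^2 ≤ x^2 := Nat.pow_le_pow_left h3 2
    omega

theorem stmt_15 (x n : ℕ) (hx : 0 < x) (hn : 0 < n) :
    x^2 = 12^n + 25029865 ↔
      (x, n) = (5003, 2) ∨ (x, n) = (5293, 6) ∨ (x, n) = (21331, 8) := by
  constructor
  · intro h
    rcases Nat.even_or_odd n with he | ho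
    · -- n even: n = m + m
      obtain ⟨m, rfl⟩ := he
      have hm : 1 ≤ m := by omega
      have hpow : (12:ℕ)^(m+m) = (12^m)^2 := by
        rw [pow_add, sq]
      rw [hpow] at h
      -- x > 12^m
      have hlt : 12^m < x := by
        by_contra hc
        push_neg at hc
        have : x^2 ≤ (12^m)^2 := Nat.pow_le_pow_left hc 2
        omega
      have hb : (12^m + 1)^2 ≤ x^2 := Nat.pow_le_pow_left hlt 2
      have hexp : (12^m + 1)^2 = (12^m)^2 + 2 * 12^m + 1 := by ring
      have hy : 12^m ≤ 12514932 := by omega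
      have hm6 : m ≤ 6 := by
        by_contra hc
        push_neg at hc
        have : (12:ℕ)^7 ≤ 12^m := Nat.pow_le_pow_right (by norm_num) hc
        norm_num at this
        omega
      interval_cases m
      · left
        have h' : x^2 = 25030009 := by rw [h]; norm_num
        have : x = 5003 := solve_sq x 5003 25030009 h' (by norm_num) (by norm_num)
        simp [this]
      · have h' : x^2 = 25050601 := by rw [h]; norm_num
        exact (no_sq x 5005 25050601 h' (by norm_num) (by norm_num)).elim
      · right; left
        have h' : x^2 = 28015849 := by rw [h]; norm_num
        have : x = 5293 := solve_sq x 5293 28015849 h' (by norm_num) (by norm_num)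
        simp [this]
      · right; right
        have h' : x^2 = 455011561 := by rw [h]; norm_num
        have : x = 21331 := solve_sq x 21331 455011561 h' (by norm_num) (by norm_num)
        simp [this]
      · have h' : x^2 = 61942394089 := by rw [h]; norm_num
        exact (no_sq x 248882 61942394089 h' (by norm_num) (by norm_num)).elim
      · have h' : x^2 = 8916125478121 := by rw [h]; norm_num
        exact (no_sq x 2985988 8916125478121 h' (by norm_num) (by norm_num)).elim
    · -- n odd: contradiction mod 13
      obtain ⟨m, rfl⟩ := ho
      have h12 : (12:ℕ)^(2*m+1) % 13 = 12 := by
        have he : (12:ℕ)^(2*m+1) = 144^m * 12 := by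
          rw [pow_succ, pow_mul]
          norm_num
        rw [he, Nat.mul_mod, Nat.pow_mod]
        norm_num
      have hx2 : x^2 % 13 = 2 := by
        rw [h, Nat.add_mod, h12]
      rw [Nat.pow_mod] at hx2
      exfalso
      have hr : x % 13 < 13 := Nat.mod_lt x (by norm_num)
      generalize hg : x % 13 = r at hx2 hr
      interval_cases r <;> norm_num at hx2
  · rintro (h | h | h) <;>
      simp only [Prod.mk.injEq] at h <;>
      obtain ⟨rfl, rfl⟩ := h <;> norm_num
end

section
/- Fix an integer t and set k = t^2 + 1. For every positive integer m, define B = (k^2/(4(k-1)))·(k^{2m+2} + 2(k-2)k^m + 1); equivalently 4t^2·B = k^2(k^{2m+2} + 2(k-2)k^m + 1). Then the three pairs (x,n) = ((k^{m+2}+k-2)/(2t), 0), (k(k^{m+1}-1)/(2t), m+2), and (k(k^m(k-2)+1)/(2t), 2m+2) satisfy the equation x^2 + k^n = B, in the sense that (2t·x)^2 + 4t^2·k^n = 4t^2·B holds as an identity for the corresponding values 2t·x = k^{m+2}+k-2, k(k^{m+1}-1), k(k^m(k-2)+1). -/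
theorem stmt_17 (t : ℤ) (k : ℤ) (hk : k = t^2 + 1) (m : ℕ) (hm : 0 < m) :
    ((k^(m+2) + k - 2)^2 + 4*t^2 * k^0
      = k^2 * (k^(2*m+2) + 2*(k-2)*k^m + 1)) ∧
    ((k * (k^(m+1) - 1))^2 + 4*t^2 * k^(m+2)
      = k^2 * (k^(2*m+2) + 2*(k-2)*k^m + 1)) ∧
    ((k * (k^m * (k-2) + 1))^2 + 4*t^2 * k^(2*m+2)
      = k^2 * (k^(2*m+2) + 2*(k-2)*k^m + 1)) := by
  have ht : t^2 = k - 1 := by rw [hk]; ring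
  refine ⟨?_, ?_, ?_⟩ <;> rw [ht] <;> ring
end
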